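/- Let m > 1, 1 < p < m, let σ be a real number with σ(m−1) + 2(p−1) > 0, let N ≥ 1 be an integer, and set α = (σ+2)/(σ(m−1)+2(p−1)) and β = (m−p)/(σ(m−1)+2(p−1)). Suppose R > 0 and f : (R,∞) → (0,∞) is a twice continuously differentiable positive solution of (f^m)''(ξ) + ((N−1)/ξ)(f^m)'(ξ) − α f(ξ) + β ξ f'(ξ) + ξ^σ f(ξ)^p = 0 such that, as ξ → ∞, ξ^{−2} f(ξ)^{m−1} → 0, ξ^{−1} f(ξ)^{m−2} f'(ξ) → 0, and ξ^σ f(ξ)^{p−1} → ℓ for some ℓ ∈ (0,∞). Then ℓ = 1/(p−1). -/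

import Mathlib

open Set Filter

lemma aux_deriv_limit_zero {R A K : ℝ} (hR : 0 < R) {Ψ D : ℝ → ℝ}
    (hD : ∀ x ∈ Set.Ioi R, HasDerivAt Ψ (D x) x)
    (hA : Filter.Tendsto Ψ Filter.atTop (nhds A))
    (hK : Filter.Tendsto (fun x => x * D x) Filter.atTop (nhds K)) : K = 0 := by
  by_contra hK0
  have hKpos : 0 < |K| := abs_pos.mpr hK0
  have h2 : Tendsto (fun ξ : ℝ => Ψ (2 * ξ) - Ψ ξ) atTop (nhds 0) := by
    have hmul : Tendsto (fun ξ : ℝ => (2 : ℝ) * ξ) atTop atTop :=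
      Tendsto.const_mul_atTop two_pos tendsto_id
    simpa using (hA.comp hmul).sub hA
  have e1 : ∀ᶠ x in atTop, |x * D x - K| < |K| / 2 := by
    have := hK.eventually (Metric.ball_mem_nhds K (by positivity : (0:ℝ) < |K| / 2))
    simpa [Real.dist_eq] using this
  have e2 : ∀ᶠ ξ in atTop, |Ψ (2 * ξ) - Ψ ξ| < |K| / 4 := by
    have := h2.eventually (Metric.ball_mem_nhds 0 (by positivity : (0:ℝ) < |K| / 4))
    simpa [Real.dist_eq] using this
  obtain ⟨M1, hM1⟩ := eventually_atTop.mp e1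
  obtain ⟨M2, hM2⟩ := eventually_atTop.mp e2
  set ξ : ℝ := max (max M1 M2) R + 1 with hξdef
  have hξR : R < ξ := by
    have : R ≤ max (max M1 M2) R := le_max_right _ _
    linarith
  have hξ0 : 0 < ξ := lt_trans hR hξR
  have hξM1 : M1 ≤ ξ := by
    have : M1 ≤ max (max M1 M2) R := le_trans (le_max_left _ _) (le_max_left _ _)
    linarith
  have hξM2 : M2 ≤ ξ := by
    have : M2 ≤ max (max M1 M2) R := le_trans (le_max_right _ _) (le_max_left _ _)
    linarith
  have hlt : ξ < 2 * ξ := by linarith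
  have hsub : Icc ξ (2 * ξ) ⊆ Ioi R := fun y hy => lt_of_lt_of_le hξR hy.1
  have hcont : ContinuousOn Ψ (Icc ξ (2 * ξ)) := fun y hy =>
    ((hD y (hsub hy)).continuousAt).continuousWithinAt
  have hdiff : DifferentiableOn ℝ Ψ (Ioo ξ (2 * ξ)) := fun y hy =>
    ((hD y (hsub (Ioo_subset_Icc_self hy))).differentiableAt).differentiableWithinAt
  obtain ⟨c, hc, hslope⟩ := exists_deriv_eq_slope Ψ hlt hcont hdiff
  have hcR : c ∈ Ioi R := hsub (Ioo_subset_Icc_self hc)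
  have hcD : deriv Ψ c = D c := (hD c hcR).deriv
  have hc0 : 0 < c := lt_trans hR hcR
  have hEq : Ψ (2 * ξ) - Ψ ξ = D c * ξ := by
    rw [hcD] at hslope
    have hne : (2 * ξ - ξ) ≠ 0 := by linarith
    field_simp at hslope
    linarith [hslope]
  have hb1 : |c * D c - K| < |K| / 2 := hM1 c (le_trans hξM1 (le_of_lt hc.1))
  have hb2 : |Ψ (2 * ξ) - Ψ ξ| < |K| / 4 := hM2 ξ hξM2
  have hcDc : |K| / 2 < |c * D c| := by
    have := abs_sub_abs_le_abs_sub (c * D c) K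
    have h3 := abs_sub_comm (c * D c) K
    linarith [abs_sub_abs_le_abs_sub K (c * D c), hb1, abs_sub_comm K (c * D c)]
  have hcabs : |c * D c| = c * |D c| := by
    rw [abs_mul, abs_of_pos hc0]
  have hclt : c < 2 * ξ := hc.2
  have hDc : |K| / (4 * ξ) < |D c| := by
    rw [hcabs] at hcDc
    have h4 : |K| / 2 < 2 * ξ * |D c| := lt_of_lt_of_le hcDc (by nlinarith [abs_nonneg (D c)])
    rw [div_lt_iff₀ (by linarith : (0:ℝ) < 4 * ξ)]
    nlinarith
  have : |K| / 4 < |Ψ (2 * ξ) - Ψ ξ| := by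
    rw [hEq, abs_mul, abs_of_pos hξ0]
    rw [div_lt_iff₀ (by linarith : (0:ℝ) < 4 * ξ)] at hDc
    nlinarith [abs_nonneg (D c)]
  linarith


/-- Lemma 2.4: the only admissible constant limit of ξ^σ f(ξ)^(p-1) at infinity along
a positive solution of the self-similar profile ODE (with X → 0 and Y → 0) is
ℓ = 1/(p-1), corresponding to the tail f(ξ) ~ (1/(p-1))^(1/(p-1)) ξ^(-σ/(p-1)). -/
theorem tail_limit_is_one_over_p_minus_one (m p σ : ℝ) (N : ℕ)
    (hm : 1 < m) (hp1 : 1 < p) (hpm : p < m)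
    (hL : 0 < σ * (m - 1) + 2 * (p - 1)) (hN : 1 ≤ N)
    (α β : ℝ)
    (hα : α = (σ + 2) / (σ * (m - 1) + 2 * (p - 1)))
    (hβ : β = (m - p) / (σ * (m - 1) + 2 * (p - 1)))
    (R : ℝ) (hR : 0 < R) (f : ℝ → ℝ)
    (hreg : ∀ ξ ∈ Set.Ioi R, 0 < f ξ ∧ DifferentiableAt ℝ f ξ ∧
      DifferentiableAt ℝ (deriv f) ξ)
    (hcont : ContinuousOn (deriv (deriv f)) (Set.Ioi R))
    (hODE : ∀ ξ ∈ Set.Ioi R,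
      deriv (deriv fun x => f x ^ m) ξ
        + ((N : ℝ) - 1) / ξ * deriv (fun x => f x ^ m) ξ
        - α * f ξ + β * ξ * deriv f ξ + ξ ^ σ * f ξ ^ p = 0)
    (hX : Filter.Tendsto (fun ξ : ℝ => ξ ^ (-2 : ℝ) * f ξ ^ (m - 1))
      Filter.atTop (nhds 0))
    (hY : Filter.Tendsto (fun ξ : ℝ => ξ ^ (-1 : ℝ) * f ξ ^ (m - 2) * deriv f ξ)
      Filter.atTop (nhds 0))
    (ℓ : ℝ) (hℓpos : 0 < ℓ)
    (hZ : Filter.Tendsto (fun ξ : ℝ => ξ ^ σ * f ξ ^ (p - 1))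
      Filter.atTop (nhds ℓ)) :
    ℓ = 1 / (p - 1) := by
  have hp1' : (0:ℝ) < p - 1 := by linarith
  set κ : ℝ := σ / (p - 1) with hκ
  set u : ℝ → ℝ := fun x => f x ^ m with hu
  -- derivative of u
  have hud : ∀ x ∈ Set.Ioi R, HasDerivAt u (deriv f x * m * f x ^ (m - 1)) x := by
    intro x hx
    exact ((hreg x hx).2.1.hasDerivAt.rpow_const (Or.inl (hreg x hx).1.ne'))
  have hu' : ∀ x ∈ Set.Ioi R, deriv u x = deriv f x * m * f x ^ (m - 1) :=
    fun x hx => (hud x hx).deriv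
  -- deriv u is differentiable on Ioi R
  have hgdiff : ∀ x ∈ Set.Ioi R,
      DifferentiableAt ℝ (fun y => deriv f y * m * f y ^ (m - 1)) x := by
    intro x hx
    exact ((hreg x hx).2.2.mul_const m).mul
      ((hreg x hx).2.1.rpow_const (Or.inl (hreg x hx).1.ne'))
  have hequ : ∀ x ∈ Set.Ioi R,
      deriv u =ᶠ[nhds x] fun y => deriv f y * m * f y ^ (m - 1) := by
    intro x hx
    filter_upwards [isOpen_Ioi.mem_nhds hx] with y hy using hu' y hy
  have hdu2 : ∀ x ∈ Set.Ioi R, DifferentiableAt ℝ (deriv u) x := fun x hx =>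
    ((hequ x hx).differentiableAt_iff).mpr (hgdiff x hx)
  -- Psi and its derivative
  set Ψ : ℝ → ℝ := fun x => β * x ^ κ * f x + x ^ (κ - 1) * deriv u x with hΨ
  set D : ℝ → ℝ := fun x =>
    (β * (κ * x ^ (κ - 1)) * f x + β * x ^ κ * deriv f x)
    + ((κ - 1) * x ^ (κ - 1 - 1) * deriv u x + x ^ (κ - 1) * deriv (deriv u) x)
    with hD
  have hDD : ∀ x ∈ Set.Ioi R, HasDerivAt Ψ (D x) x := by
    intro x hx
    have hx0 : (0:ℝ) < x := lt_trans hR hx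
    have t1 : HasDerivAt (fun y : ℝ => β * y ^ κ * f y)
        (β * (κ * x ^ (κ - 1)) * f x + β * x ^ κ * deriv f x) x := by
      have h1 : HasDerivAt (fun y : ℝ => β * y ^ κ) (β * (κ * x ^ (κ - 1))) x :=
        (Real.hasDerivAt_rpow_const (Or.inl hx0.ne')).const_mul β
      exact h1.mul (hreg x hx).2.1.hasDerivAt
    have t2 : HasDerivAt (fun y : ℝ => y ^ (κ - 1) * deriv u y)
        ((κ - 1) * x ^ (κ - 1 - 1) * deriv u x + x ^ (κ - 1) * deriv (deriv u) x) x := by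
      have h1 : HasDerivAt (fun y : ℝ => y ^ (κ - 1)) ((κ - 1) * x ^ (κ - 1 - 1)) x :=
        Real.hasDerivAt_rpow_const (Or.inl hx0.ne')
      exact h1.mul ((hdu2 x hx).hasDerivAt)
    exact t1.add t2
  -- the key algebraic identity
  set E : ℝ → ℝ := fun x => (x ^ κ * f x) *
      ((α + β * κ) - x ^ σ * f x ^ (p - 1)
        + (κ - (N:ℝ)) * m * (x ^ (-1:ℝ) * f x ^ (m - 2) * deriv f x)) with hE
  have hmain : ∀ x ∈ Set.Ioi R, x * D x = E x := by
    intro x hx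
    have hx0 : (0:ℝ) < x := lt_trans hR hx
    have hfx : 0 < f x := (hreg x hx).1
    have hODE' := hODE x hx
    rw [hu' x hx] at hODE'
    have ddu : deriv (deriv u) x = α * f x - β * x * deriv f x - x ^ σ * f x ^ p
        - ((N:ℝ) - 1) / x * (deriv f x * m * f x ^ (m - 1)) := by linarith
    have eK1 : x ^ (κ - 1) = x ^ (κ - 1 - 1) * x := by
      rw [← Real.rpow_add_one hx0.ne' (κ - 1 - 1)]; congr 1; ring
    have eK2 : x ^ κ = x ^ (κ - 1 - 1) * x * x := by
      rw [← Real.rpow_add_one hx0.ne' (κ - 1 - 1), ← Real.rpow_add_one hx0.ne']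
      congr 1; ring
    have e3 : f x ^ (m - 1) = f x ^ (m - 2) * f x := by
      rw [← Real.rpow_add_one hfx.ne' (m - 2)]; congr 1; ring
    have e4 : f x ^ p = f x ^ (p - 1) * f x := by
      rw [← Real.rpow_add_one hfx.ne' (p - 1)]; congr 1; ring
    have e5 : x ^ (-1:ℝ) = x⁻¹ := Real.rpow_neg_one x
    rw [hD, hE]
    simp only []
    rw [hu' x hx, ddu, eK2, eK1, e3, e4, e5]
    field_simp
    ring
  -- limit of x^κ * f x
  have hLr : Tendsto (fun x : ℝ => x ^ κ * f x) atTop (nhds (ℓ ^ (1 / (p - 1)))) := by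
    have h1 : Tendsto (fun x : ℝ => (x ^ σ * f x ^ (p - 1)) ^ (1 / (p - 1))) atTop
        (nhds (ℓ ^ (1 / (p - 1)))) := hZ.rpow_const (Or.inl hℓpos.ne')
    refine Filter.Tendsto.congr' ?_ h1
    filter_upwards [eventually_gt_atTop R] with x hx
    have hx0 : (0:ℝ) < x := lt_trans hR hx
    have hfx : 0 < f x := (hreg x hx).1
    rw [Real.mul_rpow (Real.rpow_nonneg hx0.le σ) (Real.rpow_nonneg hfx.le _),
      ← Real.rpow_mul hx0.le, ← Real.rpow_mul hfx.le]
    have h2 : σ * (1 / (p - 1)) = κ := by rw [hκ]; ring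
    have h3 : (p - 1) * (1 / (p - 1)) = 1 := by field_simp
    rw [h2, h3, Real.rpow_one]
  have hLrpos : 0 < ℓ ^ (1 / (p - 1)) := Real.rpow_pos_of_pos hℓpos _
  -- limit of E
  have hElim : Tendsto E atTop (nhds (ℓ ^ (1 / (p - 1)) * (α + β * κ - ℓ))) := by
    have h1 : Tendsto (fun x : ℝ => (α + β * κ) - x ^ σ * f x ^ (p - 1)
        + (κ - (N:ℝ)) * m * (x ^ (-1:ℝ) * f x ^ (m - 2) * deriv f x)) atTop
        (nhds ((α + β * κ) - ℓ + (κ - (N:ℝ)) * m * 0)) :=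
      (tendsto_const_nhds.sub hZ).add (hY.const_mul ((κ - (N:ℝ)) * m))
    have h2 := hLr.mul h1
    rw [hE]
    convert h2 using 2
    ring
  -- limit of Ψ
  have hΨlim : Tendsto Ψ atTop (nhds (β * ℓ ^ (1 / (p - 1)))) := by
    have h1 : Tendsto (fun x : ℝ => β * (x ^ κ * f x)
        + m * ((x ^ κ * f x) * (x ^ (-1:ℝ) * f x ^ (m - 2) * deriv f x))) atTop
        (nhds (β * ℓ ^ (1 / (p - 1)) + m * (ℓ ^ (1 / (p - 1)) * 0))) :=
      (hLr.const_mul β).add ((hLr.mul hY).const_mul m)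
    have h2 : Tendsto (fun x : ℝ => β * (x ^ κ * f x)
        + m * ((x ^ κ * f x) * (x ^ (-1:ℝ) * f x ^ (m - 2) * deriv f x))) atTop
        (nhds (β * ℓ ^ (1 / (p - 1)))) := by convert h1 using 2; ring
    refine Filter.Tendsto.congr' ?_ h2
    filter_upwards [eventually_gt_atTop R] with x hx
    have hx0 : (0:ℝ) < x := lt_trans hR hx
    have hfx : 0 < f x := (hreg x hx).1
    have eK1 : x ^ (κ - 1) = x ^ κ / x := by rw [Real.rpow_sub hx0, Real.rpow_one]
    have e3 : f x ^ (m - 1) = f x ^ (m - 2) * f x := by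
      rw [← Real.rpow_add_one hfx.ne' (m - 2)]; congr 1; ring
    have e5 : x ^ (-1:ℝ) = x⁻¹ := Real.rpow_neg_one x
    rw [hΨ]
    simp only []
    rw [hu' x hx, eK1, e3, e5]
    field_simp
  -- conclude K = 0
  have hxD : Tendsto (fun x : ℝ => x * D x) atTop
      (nhds (ℓ ^ (1 / (p - 1)) * (α + β * κ - ℓ))) := by
    refine Filter.Tendsto.congr' ?_ hElim
    filter_upwards [eventually_gt_atTop R] with x hx
    exact (hmain x hx).symm
  have hKzero : ℓ ^ (1 / (p - 1)) * (α + β * κ - ℓ) = 0 :=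
    aux_deriv_limit_zero hR hDD hΨlim hxD
  have hℓeq : ℓ = α + β * κ := by
    rcases mul_eq_zero.mp hKzero with h | h
    · exact absurd h hLrpos.ne'
    · linarith
  have hLne : σ * (m - 1) + 2 * (p - 1) ≠ 0 := hL.ne'
  rw [hℓeq, hα, hβ, hκ]
  field_simp
  ring
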